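/- arXiv:0908.4569 — 3 statements merged into one kernel-verified Lean document; each statement's English description precedes it below -/
import Mathlib

section
/- If α > 0 and f ∈ (α/(1+α), 1), then there exists a unique H > 0 satisfying (1−f)·H = (1/α)·log(1 + (α/(1+α))·H). -/
private lemma exists_unique_H_aux (α c k : ℝ) (hα : 0 < α) (hc : 0 < c) (hk : 0 < k)
    (hcα : c * (1 + α) = α) (hkc : (1 + α) * k < 1) :
    ∃! H : ℝ, 0 < H ∧ k * H = (1 / α) * Real.log (1 + c * H) := by
  have hα1 : (0:ℝ) < 1 + α := by nlinarith
  -- key strict concavity inequality: any root forces strict inequality at smaller points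
  have key : ∀ H1 H2 : ℝ, 0 < H1 → H1 < H2 →
      k * H2 = (1 / α) * Real.log (1 + c * H2) →
      k * H1 < (1 / α) * Real.log (1 + c * H1) := by
    intro H1 H2 h1 h12 hroot
    have h2 : 0 < H2 := h1.trans h12
    have ht0 : 0 < H1 / H2 := div_pos h1 h2
    have ht1 : H1 / H2 < 1 := (div_lt_one h2).mpr h12
    have htH2 : H1 / H2 * H2 = H1 := div_mul_cancel₀ _ h2.ne'
    have hmem1 : (1:ℝ) ∈ Set.Ioi (0:ℝ) := by norm_num
    have hmem2 : 1 + c * H2 ∈ Set.Ioi (0:ℝ) := by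
      simp only [Set.mem_Ioi]; nlinarith
    have hne : (1:ℝ) ≠ 1 + c * H2 := by nlinarith
    have hcc := strictConcaveOn_log_Ioi.2 hmem1 hmem2 hne
      (show (0:ℝ) < 1 - H1 / H2 by linarith) ht0 (by ring)
    simp only [smul_eq_mul, Real.log_one, mul_zero, mul_one, zero_add] at hcc
    have harg : 1 - H1 / H2 + H1 / H2 * (1 + c * H2) = 1 + c * H1 := by
      have h' : H1 / H2 * (c * H2) = c * H1 := by
        rw [mul_comm c H2, ← mul_assoc, htH2, mul_comm]
      nlinarith [h']
    rw [harg] at hcc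
    have hα' : (0:ℝ) < 1 / α := by positivity
    calc k * H1 = H1 / H2 * (k * H2) := by field_simp
      _ = H1 / H2 * ((1/α) * Real.log (1 + c * H2)) := by rw [hroot]
      _ = (1/α) * (H1 / H2 * Real.log (1 + c * H2)) := by ring
      _ < (1/α) * Real.log (1 + c * H1) := mul_lt_mul_of_pos_left hcc hα'
  -- small point where g < 0
  obtain ⟨r, hr_def⟩ : ∃ r : ℝ, r = 1 / ((1 + α) * k) := ⟨_, rfl⟩
  have hr1 : 1 < r := by
    rw [hr_def, lt_div_iff₀ (by positivity)]; linarith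
  obtain ⟨ε, hε_def⟩ : ∃ e : ℝ, e = (r - 1) / (2 * c) := ⟨_, rfl⟩
  have hε : 0 < ε := by rw [hε_def]; exact div_pos (by linarith) (by positivity)
  have hcε : c * ε = (r - 1) / 2 := by
    rw [hε_def]; field_simp
  have h1cε_lt : 1 + c * ε < r := by rw [hcε]; linarith
  have h1cε_pos : (0:ℝ) < 1 + c * ε := by nlinarith [mul_pos hc hε]
  have hgε : k * ε - (1/α) * Real.log (1 + c * ε) < 0 := by
    have hlog : 1 - (1 + c * ε)⁻¹ ≤ Real.log (1 + c * ε) :=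
      Real.one_sub_inv_le_log_of_pos h1cε_pos
    have h1 : 1 - (1 + c * ε)⁻¹ = c * ε / (1 + c * ε) := by
      field_simp; ring
    rw [h1] at hlog
    have hklt : k * (1 + c * ε) * (1 + α) < 1 := by
      have h' : (1 + α) * k * (1 + c * ε) < (1 + α) * k * r :=
        mul_lt_mul_of_pos_left h1cε_lt (by positivity)
      have hrr : (1 + α) * k * r = 1 := by
        rw [hr_def]; field_simp
      nlinarith
    have h2 : k * ε * (α * (1 + c * ε)) < c * ε := by
      nlinarith [mul_lt_mul_of_pos_right hklt (mul_pos hc hε)]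
    have h3 : (1/α) * (c * ε / (1 + c * ε)) = c * ε / (α * (1 + c * ε)) := by
      rw [div_mul_div_comm, one_mul]
    have hstep : k * ε < (1/α) * (c * ε / (1 + c * ε)) := by
      rw [h3, lt_div_iff₀ (by positivity)]; exact h2
    have : (1/α) * (c * ε / (1 + c * ε)) ≤ (1/α) * Real.log (1 + c * ε) :=
      mul_le_mul_of_nonneg_left hlog (by positivity)
    linarith
  -- large point where g > 0
  obtain ⟨M, hM_def⟩ : ∃ M : ℝ,
      M = max (max ε 1) ((4 + 4 * c) / (k * α) ^ 2) + 1 := ⟨_, rfl⟩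
  have hMε : ε < M := by
    have h1 := le_max_left ε 1
    have h2 := le_max_left (max ε 1) ((4 + 4 * c) / (k * α) ^ 2)
    rw [hM_def]; linarith
  have hM1 : 1 < M := by
    have h1 := le_max_right ε 1
    have h2 := le_max_left (max ε 1) ((4 + 4 * c) / (k * α) ^ 2)
    rw [hM_def]; linarith
  have hMb : (4 + 4 * c) / (k * α) ^ 2 < M := by
    have h2 := le_max_right (max ε 1) ((4 + 4 * c) / (k * α) ^ 2)
    rw [hM_def]; linarith
  have hM0 : 0 < M := by linarith
  have h1cM_pos : (0:ℝ) < 1 + c * M := by positivity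
  have hgM : 0 < k * M - (1/α) * Real.log (1 + c * M) := by
    have hb : (4 + 4 * c) < M * (k * α) ^ 2 := by
      rw [div_lt_iff₀ (by positivity)] at hMb; linarith
    have hsq : Real.sqrt (1 + c * M) < k * α * M / 2 := by
      rw [Real.sqrt_lt' (by positivity)]
      nlinarith [mul_lt_mul_of_pos_right hb hM0, mul_pos hc (mul_pos hM0 hM0)]
    have hlogs : Real.log (Real.sqrt (1 + c * M)) ≤ Real.sqrt (1 + c * M) - 1 :=
      Real.log_le_sub_one_of_pos (Real.sqrt_pos.mpr h1cM_pos)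
    have hls : Real.log (1 + c * M) = 2 * Real.log (Real.sqrt (1 + c * M)) := by
      rw [Real.log_sqrt (le_of_lt h1cM_pos)]; ring
    have hlog : Real.log (1 + c * M) < k * α * M := by
      rw [hls]; nlinarith
    have h' : (1/α) * Real.log (1 + c * M) < (1/α) * (k * α * M) :=
      mul_lt_mul_of_pos_left hlog (by positivity)
    have heq : (1/α) * (k * α * M) = k * M := by field_simp
    linarith [heq ▸ h']
  -- continuity and IVT
  have hcont : ContinuousOn (fun H : ℝ => k * H - (1/α) * Real.log (1 + c * H))
      (Set.Icc ε M) := by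
    apply ContinuousOn.sub
    · exact (continuous_const.mul continuous_id).continuousOn
    · apply ContinuousOn.mul continuousOn_const
      apply ContinuousOn.log
      · exact (continuous_const.add (continuous_const.mul continuous_id)).continuousOn
      · intro x hx
        have hx1 : ε ≤ x := hx.1
        have : 0 < 1 + c * x := by nlinarith
        linarith
  have hivt := intermediate_value_Icc (le_of_lt hMε) hcont
  obtain ⟨H, hHmem, hgH⟩ := hivt (Set.mem_Icc.mpr ⟨le_of_lt hgε, le_of_lt hgM⟩)
  have hHpos : 0 < H := lt_of_lt_of_le hε hHmem.1
  simp only at hgH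
  have hHeq : k * H = (1/α) * Real.log (1 + c * H) := by linarith
  refine ⟨H, ⟨hHpos, hHeq⟩, ?_⟩
  rintro H' ⟨hH'pos, hH'eq⟩
  rcases lt_trichotomy H' H with h | h | h
  · exact absurd hH'eq (ne_of_lt (key H' H hH'pos h hHeq))
  · exact h
  · exact absurd hHeq (ne_of_lt (key H H' hHpos h hH'eq))

/-- For `α > 0` and `f ∈ (α/(1+α), 1)` there exists a unique `H > 0` with
`(1−f)·H = (1/α)·log(1 + (α/(1+α))·H)`. -/
theorem exists_unique_H (α f : ℝ) (hα : 0 < α) (hf1 : α / (1 + α) < f) (hf2 : f < 1) :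
    ∃! H : ℝ, 0 < H ∧ (1 - f) * H = (1 / α) * Real.log (1 + (α / (1 + α)) * H) := by
  have hα1 : (0:ℝ) < 1 + α := by linarith
  refine exists_unique_H_aux α (α / (1 + α)) (1 - f) hα (div_pos hα hα1) (by linarith) ?_ ?_
  · field_simp
  · have h := (div_lt_iff₀ hα1).mp hf1
    nlinarith
end

section
/- If α > 0 and p₀ > 1 − f with 0 < f < 1, then there exists a unique H > 0 satisfying (1−f)·H = (1/α)·log(1 + α·p₀·H). -/
/-- For `α > 0`, `0 < f < 1` and `p₀ > 1 − f`, there exists a unique `H > 0`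
with `(1−f)·H = (1/α)·log(1 + α·p₀·H)`. -/
theorem exists_unique_H_general (α f p₀ : ℝ) (hα : 0 < α) (hf0 : 0 < f) (hf1 : f < 1)
    (hp : 1 - f < p₀) :
    ∃! H : ℝ, 0 < H ∧ (1 - f) * H = (1 / α) * Real.log (1 + α * p₀ * H) := by
  have hp0 : 0 < p₀ := by linarith
  set b := α * p₀ with hbdef
  set c := α * (1 - f) with hcdef
  have hb : 0 < b := by positivity
  have h1f : 0 < 1 - f := by linarith
  have hc : 0 < c := by positivity
  have hcb : c < b := by
    rw [hbdef, hcdef]; nlinarith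
  -- key equivalence
  have key : ∀ H : ℝ, ((1 - f) * H = (1 / α) * Real.log (1 + α * p₀ * H)) ↔
      Real.log (1 + b * H) = c * H := by
    intro H
    rw [hbdef, hcdef]
    constructor
    · intro h; field_simp at h; rw [show H * α * p₀ = α * p₀ * H by ring] at h; linarith
    · intro h; field_simp; rw [show H * α * p₀ = α * p₀ * H by ring]; linarith
  -- uniqueness helper
  have uniq : ∀ x y : ℝ, 0 < x → 0 < y → Real.log (1 + b*x) = c*x →
      Real.log (1 + b*y) = c*y → ¬ (x < y) := by
    intro x y hx hy hlx hly hxy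
    have ht0 : 0 < x / y := by positivity
    have ht1 : x / y < 1 := (div_lt_one hy).mpr hxy
    have h1 : (1:ℝ) ∈ Set.Ioi (0:ℝ) := by norm_num
    have h2 : (1 + b*y) ∈ Set.Ioi (0:ℝ) := by
      simp only [Set.mem_Ioi]; positivity
    have hne : (1:ℝ) ≠ 1 + b*y := by nlinarith
    have hsc := strictConcaveOn_log_Ioi.2 h1 h2 hne
      (by linarith : 0 < 1 - x/y) ht0 (by ring)
    rw [smul_eq_mul, smul_eq_mul, smul_eq_mul, smul_eq_mul] at hsc
    have hcomb : (1 - x/y) * 1 + (x/y) * (1 + b*y) = 1 + b*x := by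
      field_simp; ring
    rw [hcomb, Real.log_one, hlx, hly] at hsc
    have hfin : (x / y) * (c * y) = c * x := by
      field_simp
    rw [hfin] at hsc
    linarith
  -- the positive point
  set H₀ := (b - c) / (b * c) with hH0def
  have hH0 : 0 < H₀ := by
    apply div_pos (by linarith) (by positivity)
  have hbH0 : 1 + b * H₀ = b / c := by
    rw [hH0def]; field_simp; ring
  have hcH0 : c * H₀ = (b - c)/b := by
    rw [hH0def]; field_simp
  have hbH0pos : 0 < 1 + b * H₀ := by positivity
  have hpos0 : c * H₀ < Real.log (1 + b * H₀) := by
    rw [Real.lt_log_iff_exp_lt hbH0pos]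
    have hch0pos : 0 < c * H₀ := by positivity
    have h := Real.add_one_lt_exp (x := -(c*H₀)) (by nlinarith)
    rw [Real.exp_neg] at h
    -- h : -(c*H₀) + 1 < (exp (c*H₀))⁻¹
    have h1c : 0 < -(c*H₀) + 1 := by
      rw [hcH0]
      have : (b - c)/b < 1 := by
        rw [div_lt_one hb]; linarith
      linarith
    have hE : 0 < Real.exp (c * H₀) := Real.exp_pos _
    have h2 : Real.exp (c*H₀) < (-(c*H₀) + 1)⁻¹ := by
      have := (inv_lt_inv₀ (by positivity) h1c).mpr h
      rwa [inv_inv] at this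
    have h3 : (-(c*H₀) + 1)⁻¹ = 1 + b * H₀ := by
      rw [hcH0, hbH0]
      rw [show -((b-c)/b) + 1 = c/b by field_simp; ring]
      rw [inv_div]
    linarith [h3 ▸ h2]
  -- the negative point
  set K := 2*b/c with hKdef
  have hK : 0 < K := by positivity
  set H₁ := max (H₀ + 1) ((2/c) * (c/(2*b) + Real.log K)) with hH1def
  have hH1gt : H₀ < H₁ := lt_of_lt_of_le (by linarith) (le_max_left _ _)
  have hH1pos : 0 < H₁ := lt_trans hH0 hH1gt
  have hbH1pos : 0 < 1 + b * H₁ := by positivity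
  have hneg : Real.log (1 + b * H₁) < c * H₁ := by
    have hlog1 : Real.log ((1 + b*H₁)/K) ≤ (1 + b*H₁)/K - 1 :=
      Real.log_le_sub_one_of_pos (by positivity)
    have hlog2 : Real.log ((1 + b*H₁)/K) = Real.log (1 + b*H₁) - Real.log K :=
      Real.log_div (by positivity) (by positivity)
    have hdiv : (1 + b*H₁)/K = c/(2*b) + (c/2) * H₁ := by
      rw [hKdef]; field_simp
    have hH1ge : (2/c) * (c/(2*b) + Real.log K) ≤ H₁ := le_max_right _ _
    have hkey : c/(2*b) + Real.log K ≤ (c/2) * H₁ := by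
      have := mul_le_mul_of_nonneg_left hH1ge (le_of_lt (by positivity : (0:ℝ) < c/2))
      have heq : (c/2) * ((2/c) * (c/(2*b) + Real.log K)) = c/(2*b) + Real.log K := by
        field_simp
      linarith [heq ▸ this]
    have : Real.log (1 + b*H₁) ≤ c/(2*b) + (c/2)*H₁ - 1 + Real.log K := by
      rw [hlog2] at hlog1; linarith [hdiv ▸ hlog1]
    nlinarith [hkey]
  -- IVT
  set ψ := fun H : ℝ => Real.log (1 + b * H) - c * H with hψdef
  have hcont : ContinuousOn ψ (Set.Icc H₀ H₁) := by
    apply ContinuousOn.sub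
    · apply ContinuousOn.log (by fun_prop)
      intro x hx
      have hx0 : H₀ ≤ x := hx.1
      have : 0 < 1 + b * x := by nlinarith
      linarith
    · fun_prop
  have hsub := intermediate_value_Icc' (le_of_lt hH1gt) hcont
  have hmem : (0:ℝ) ∈ Set.Icc (ψ H₁) (ψ H₀) := by
    constructor
    · simp only [hψdef]; linarith
    · simp only [hψdef]; linarith
  obtain ⟨H, hHmem, hHeq⟩ := hsub hmem
  have hHpos : 0 < H := lt_of_lt_of_le hH0 hHmem.1
  have hHlog : Real.log (1 + b * H) = c * H := by
    have : Real.log (1 + b * H) - c * H = 0 := hHeq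
    linarith
  refine ⟨H, ⟨hHpos, (key H).mpr hHlog⟩, ?_⟩
  rintro y ⟨hy0, hyeq⟩
  have hylog := (key y).mp hyeq
  rcases lt_trichotomy y H with h | h | h
  · exact absurd h (uniq y H hy0 hHpos hylog hHlog)
  · exact h
  · exact absurd h (uniq H y hHpos hy0 hHlog hylog)
end

section
/- Let φ_lim(α, f) = (1/α)·[−(f − α(1−f)) + log(1/((1+α)(1−f)))]. Then φ_lim(α, f) > 0 for all f ∈ (α/(1+α), 1). -/
/-- `φ_lim(α, f) = (1/α)[−(f − α(1−f)) + log(1/((1+α)(1−f)))]` is positive for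
all `f ∈ (α/(1+α), 1)`. -/
theorem philim_pos (α f : ℝ) (hα : 0 < α) (hf1 : α / (1 + α) < f) (hf2 : f < 1) :
    0 < (1 / α) * (-(f - α * (1 - f)) + Real.log (1 / ((1 + α) * (1 - f)))) := by
  have h1α : (0:ℝ) < 1 + α := by linarith
  set x : ℝ := (1 + α) * (1 - f) with hxdef
  have hx0 : 0 < x := by
    have : 0 < 1 - f := by linarith
    positivity
  have hx1 : x < 1 := by
    have := (div_lt_iff₀ h1α).mp hf1
    nlinarith
  have hlog := Real.log_lt_sub_one_of_pos hx0 (ne_of_lt hx1)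
  have hfe : -(f - α * (1 - f)) = x - 1 := by ring
  rw [hfe, Real.log_div one_ne_zero (ne_of_gt hx0), Real.log_one]
  have : 0 < x - 1 + (0 - Real.log x) := by linarith
  positivity
end
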